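/- Adequacy of evidence as runtime sensitivity monitor: if a well-typed closed GSCheck expression e (obtained by elaboration of a GS expression) reduces in zero or more steps to a value ⟨T₁, T₂⟩ u :: T, then T₂ ⊑ T, i.e., the right-hand component of the value's evidence is at least as precise as the ascribed type; in particular the monitored sensitivity environment (the lower bounds of the sensitivity environment of T₂) is contained interval-wise in the sensitivity environment of T. -/

import Mathlib

open Classical

noncomputable section

namespace GS

/-! ## Base types, constants, primitive operations -/

/-- Base types. -/
inductive BaseTy where
  | real
  | bool
deriving DecidableEq

/-- Constants (literal values of base types). -/
inductive Const where
  | r : ℝ → Const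
  | b : Bool → Const

/-- Primitive (binary) operations. -/
inductive Op where
  | add
  | mul
  | le

/-! ## Gradual sensitivities: sensitivity intervals -/

/-- A gradual sensitivity: a valid interval `[lo,hi]` with `0 ≤ lo ≤ hi ≤ ∞`
over the extended nonnegative reals. The unknown sensitivity `?` is `[0,∞]`
and a fully precise sensitivity `s` is `[s,s]`. -/
structure SI where
  lo : ENNReal
  hi : ENNReal
  isle : lo ≤ hi

/-- Interval addition. -/
def SI.add (a b : SI) : SI := ⟨a.lo + b.lo, a.hi + b.hi, add_le_add a.isle b.isle⟩

/-- Interval multiplication. -/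
def SI.mul (a b : SI) : SI := ⟨a.lo * b.lo, a.hi * b.hi, mul_le_mul' a.isle b.isle⟩

/-- Interval join. -/
def SI.join (a b : SI) : SI := ⟨a.lo ⊔ b.lo, a.hi ⊔ b.hi, sup_le_sup a.isle b.isle⟩

/-- Precision on gradual sensitivities: interval inclusion. -/
def SI.prec (a b : SI) : Prop := b.lo ≤ a.lo ∧ a.hi ≤ b.hi

/-- Consistent sensitivity ordering: `[s₁,s₂] ⪅ [s₃,s₄]` iff `s₁ ≤ s₄`. -/
def SI.cle (a b : SI) : Prop := a.lo ≤ b.hi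

/-- A gradual sensitivity is bounded if it does not contain ∞. -/
def SI.bounded (a : SI) : Prop := a.hi ≠ ⊤

/-- A gradual sensitivity is static (fully precise) if it is a singleton. -/
def SI.static (a : SI) : Prop := a.lo = a.hi

/-- The zero sensitivity. -/
def SI.zero : SI := ⟨0, 0, le_rfl⟩

/-- The infinite sensitivity. -/
def SI.inf : SI := ⟨⊤, ⊤, le_rfl⟩

/-- The unknown sensitivity `? = [0,∞]`. -/
def SI.unknown : SI := ⟨0, ⊤, le_top⟩

/-! ## Gradual sensitivity environments -/

/-- A gradual sensitivity environment: a map from distance variables to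
gradual sensitivities. -/
abbrev GEnv := String → SI

/-- Pointwise addition of sensitivity environments. -/
def addE (S1 S2 : GEnv) : GEnv := fun x => (S1 x).add (S2 x)

/-- Scaling of a sensitivity environment by a gradual sensitivity. -/
def scaleE (g : SI) (S : GEnv) : GEnv := fun x => g.mul (S x)

/-- The empty sensitivity environment ∅. -/
def zeroE : GEnv := fun _ => SI.zero

/-- Pointwise precision of sensitivity environments. -/
def precE (S1 S2 : GEnv) : Prop := ∀ x, (S1 x).prec (S2 x)

/-- A sensitivity environment is bounded if no interval contains ∞. -/
def boundedE (S : GEnv) : Prop := ∀ x, (S x).bounded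

/-- Substitution [Sr/r]S of a sensitivity environment for a distance
variable in a sensitivity environment. -/
def substDVE (r : String) (Sr : GEnv) (S : GEnv) : GEnv :=
  fun y => (if y = r then SI.zero else S y).add ((S r).mul (Sr y))

/-! ## GS types -/

/-- GS types g; `arrow g₁ S₁ g₂ S₂` is the function type g₁^{S₁} → g₂^{S₂};
`all r g S` is the distance abstraction type ∀r. g^{S}. -/
inductive GTy where
  | base : BaseTy → GTy
  | arrow : GTy → GEnv → GTy → GEnv → GTy
  | all : String → GTy → GEnv → GTy

/-- Sensitivity types T = g^Σ. -/
abbrev CTy := GTy × GEnv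

/-- Substitution [Sr/r] of a sensitivity environment for a distance variable
in a type (recursively in all nested sensitivity environments, respecting
the ∀-binder). -/
def substT (r : String) (Sr : GEnv) : GTy → GTy
  | .base B => .base B
  | .arrow g1 S1 g2 S2 =>
      .arrow (substT r Sr g1) (substDVE r Sr S1) (substT r Sr g2) (substDVE r Sr S2)
  | .all r' g S =>
      if r' = r then .all r' g S
      else .all r' (substT r Sr g) (substDVE r Sr S)

/-- Size of a type (used for termination of the logical relations). -/
def GTy.size : GTy → ℕ
  | .base _ => 1
  | .arrow g1 _ g2 _ => g1.size + g2.size + 1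
  | .all _ g _ => g.size + 1

theorem size_substT (r : String) (Sr : GEnv) (g : GTy) :
    (substT r Sr g).size = g.size := by
  induction g with
  | base B => rfl
  | arrow g1 S1 g2 S2 ih1 ih2 => simp [substT, GTy.size, ih1, ih2]
  | all r' g S ih => by_cases h : r' = r <;> simp [substT, h, GTy.size, ih]

/-- Precision on GS types (covariant everywhere). -/
inductive TyPrec : GTy → GTy → Prop
  | base : TyPrec (.base B) (.base B)
  | arrow : TyPrec g1 g1' → precE S1 S1' → TyPrec g2 g2' → precE S2 S2' →
      TyPrec (.arrow g1 S1 g2 S2) (.arrow g1' S1' g2' S2')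
  | all : TyPrec g g' → precE S S' →
      TyPrec (.all r g S) (.all r g' S')

/-- Precision on sensitivity types. -/
def CTyPrec (T T' : CTy) : Prop := TyPrec T.1 T'.1 ∧ precE T.2 T'.2

/-! ## Evidence, interior and consistent transitivity -/

/-- An evidence for a consistent subtyping judgment: a pair of sensitivity
types. -/
abbrev Ev := CTy × CTy

/-- Evidence precision ⊑² (componentwise precision). -/
def EvPrec (ε ε' : Ev) : Prop := CTyPrec ε.1 ε'.1 ∧ CTyPrec ε.2 ε'.2

/-- Interior of two sensitivity environments (pointwise interior of the
consistent sensitivity ordering). -/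
def interE (S1 S2 : GEnv) : Option (GEnv × GEnv) :=
  if h : ∀ x, (S1 x).lo ≤ (S2 x).hi then
    some (fun x => ⟨(S1 x).lo, (S1 x).hi ⊓ (S2 x).hi, le_inf (S1 x).isle (h x)⟩,
          fun x => ⟨(S1 x).lo ⊔ (S2 x).lo, (S2 x).hi, sup_le (h x) (S2 x).isle⟩)
  else none

/-- Interior of two GS types (evidence for a consistent subtyping judgment,
contravariant in function domains). -/
def interT : GTy → GTy → Option (GTy × GTy)
  | .base B1, .base B2 => if B1 = B2 then some (.base B1, .base B2) else none
  | .arrow a1 sa1 b1 sb1, .arrow a2 sa2 b2 sb2 => do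
      let (a2', a1') ← interT a2 a1
      let (sa2', sa1') ← interE sa2 sa1
      let (b1', b2') ← interT b1 b2
      let (sb1', sb2') ← interE sb1 sb2
      pure (.arrow a1' sa1' b1' sb1', .arrow a2' sa2' b2' sb2')
  | .all r1 g1 s1, .all r2 g2 s2 =>
      if r1 = r2 then do
        let (g1', g2') ← interT g1 g2
        let (s1', s2') ← interE s1 s2
        pure (.all r1 g1' s1', .all r2 g2' s2')
      else none
  | _, _ => none
termination_by t1 t2 => t1.size + t2.size
decreasing_by all_goals simp [GTy.size] <;> omega

/-- Interior of two sensitivity types: the initial evidence for their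
consistent subtyping judgment. -/
def interC (T1 T2 : CTy) : Option Ev := do
  let (g1, g2) ← interT T1.1 T2.1
  let (s1, s2) ← interE T1.2 T2.2
  pure ((g1, s1), (g2, s2))

/-- Consistent transitivity on (pointwise) sensitivity environments:
combines evidences ⟨s1,s2⟩ and ⟨s3,s4⟩. -/
def ctrE (s1 s2 s3 s4 : GEnv) : Option (GEnv × GEnv) :=
  if h : ∀ x, (s1 x).lo ≤ (s1 x).hi ⊓ (s2 x).hi ⊓ (s3 x).hi ∧
              (s2 x).lo ⊔ (s3 x).lo ⊔ (s4 x).lo ≤ (s4 x).hi then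
    some (fun x => ⟨(s1 x).lo, (s1 x).hi ⊓ (s2 x).hi ⊓ (s3 x).hi, (h x).1⟩,
          fun x => ⟨(s2 x).lo ⊔ (s3 x).lo ⊔ (s4 x).lo, (s4 x).hi, (h x).2⟩)
  else none

/-- Consistent transitivity on GS types: combines evidences ⟨t1,t2⟩ and
⟨t3,t4⟩ (contravariant in function domains). -/
def ctrT : GTy → GTy → GTy → GTy → Option (GTy × GTy)
  | .base B1, .base B2, .base B3, .base B4 =>
      if B1 = B2 ∧ B2 = B3 ∧ B3 = B4 then some (.base B1, .base B4) else none
  | .arrow a1 sa1 b1 sb1, .arrow a2 sa2 b2 sb2,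
    .arrow a3 sa3 b3 sb3, .arrow a4 sa4 b4 sb4 => do
      let (a4', a1') ← ctrT a4 a3 a2 a1
      let (sa4', sa1') ← ctrE sa4 sa3 sa2 sa1
      let (b1', b4') ← ctrT b1 b2 b3 b4
      let (sb1', sb4') ← ctrE sb1 sb2 sb3 sb4
      pure (.arrow a1' sa1' b1' sb1', .arrow a4' sa4' b4' sb4')
  | .all r1 g1 s1, .all r2 g2 s2, .all r3 g3 s3, .all r4 g4 s4 =>
      if r1 = r2 ∧ r2 = r3 ∧ r3 = r4 then do
        let (g1', g4') ← ctrT g1 g2 g3 g4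
        let (s1', s4') ← ctrE s1 s2 s3 s4
        pure (.all r1 g1' s1', .all r4 g4' s4')
      else none
  | _, _, _, _ => none
termination_by t1 t2 t3 t4 => t1.size + t2.size + t3.size + t4.size
decreasing_by all_goals simp [GTy.size] <;> omega

/-- Consistent transitivity on evidences: ε₁ ∘ ε₂, undefined when transitivity
is refuted. -/
def ctrC (e1 e2 : Ev) : Option Ev := do
  let (g1, g4) ← ctrT e1.1.1 e1.2.1 e2.1.1 e2.2.1
  let (s1, s4) ← ctrE e1.1.2 e1.2.2 e2.1.2 e2.2.2
  pure ((g1, s1), (g4, s4))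

/-! ## GSCheck: the internal evidence language -/

/-- GSCheck expressions: ascriptions `ascr ε e T` carry an evidence ε and an
ascribed sensitivity type T; `err` is the runtime error term. -/
inductive CExpr where
  | const : Const → CExpr
  | op : Op → CExpr → CExpr → CExpr
  | var : String → CExpr
  | lam : String → CTy → CExpr → CExpr
  | app : CExpr → CExpr → CExpr
  | tlam : String → CExpr → CExpr
  | tapp : CExpr → GEnv → CExpr
  | ascr : Ev → CExpr → CTy → CExpr
  | err : CExpr

mutual
/-- Simple values u ::= c | λ(x:T).e | Λr.v. -/
inductive Simple : CExpr → Prop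
  | const : Simple (.const c)
  | lam : Simple (.lam x T e)
  | tlam : IsVal v → Simple (.tlam r v)
/-- Values v ::= ε u :: T. -/
inductive IsVal : CExpr → Prop
  | mk : Simple u → IsVal (.ascr ε u T)
end

/-- Term substitution. -/
def csubst (x : String) (v : CExpr) : CExpr → CExpr
  | .const c => .const c
  | .op o a b => .op o (csubst x v a) (csubst x v b)
  | .var y => if y = x then v else .var y
  | .lam y T e => if y = x then .lam y T e else .lam y T (csubst x v e)
  | .app a b => .app (csubst x v a) (csubst x v b)
  | .tlam r e => .tlam r (csubst x v e)
  | .tapp e S => .tapp (csubst x v e) S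
  | .ascr ε e T => .ascr ε (csubst x v e) T
  | .err => .err

/-- Substitution of a distance variable in a sensitivity type. -/
def substCTy (r : String) (Sr : GEnv) (T : CTy) : CTy :=
  (substT r Sr T.1, substDVE r Sr T.2)

/-- Substitution of a distance variable in an evidence. -/
def substEv (r : String) (Sr : GEnv) (ε : Ev) : Ev :=
  (substCTy r Sr ε.1, substCTy r Sr ε.2)

/-- Substitution of a distance variable in a GSCheck expression. -/
def dsubst (r : String) (Sr : GEnv) : CExpr → CExpr
  | .const c => .const c
  | .op o a b => .op o (dsubst r Sr a) (dsubst r Sr b)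
  | .var y => .var y
  | .lam y T e => .lam y (substCTy r Sr T) (dsubst r Sr e)
  | .app a b => .app (dsubst r Sr a) (dsubst r Sr b)
  | .tlam r' e => if r' = r then .tlam r' e else .tlam r' (dsubst r Sr e)
  | .tapp e S => .tapp (dsubst r Sr e) (substDVE r Sr S)
  | .ascr ε e T => .ascr (substEv r Sr ε) (dsubst r Sr e) (substCTy r Sr T)
  | .err => .err

/-- Denotation of the primitive operations. -/
def opDenote : Op → Const → Const → Option Const
  | .add, .r a, .r b => some (.r (a + b))
  | .mul, .r a, .r b => some (.r (a * b))
  | .le, .r a, .r b => some (.b (if a ≤ b then true else false))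
  | _, _, _ => none

/-- Sensitivity typing of the primitive operations: addition adds the
sensitivity environments; multiplication and comparison scale by ∞. -/
def opCTy : Op → CTy → CTy → Option CTy
  | .add, (.base .real, S1), (.base .real, S2) => some (.base .real, addE S1 S2)
  | .mul, (.base .real, S1), (.base .real, S2) =>
      some (.base .real, scaleE SI.inf (addE S1 S2))
  | .le, (.base .real, S1), (.base .real, S2) =>
      some (.base .bool, scaleE SI.inf (addE S1 S2))
  | _, _, _ => none

/-- Lifting of operation typing to evidences. -/
def opEv (o : Op) (ε1 ε2 : Ev) : Option Ev := do
  let a ← opCTy o ε1.1 ε2.1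
  let b ← opCTy o ε1.2 ε2.2
  pure (a, b)

/-- Domain of a function sensitivity type. -/
def domC : CTy → Option CTy
  | (.arrow g1 S1 _ _, _) => some (g1, S1)
  | _ => none

/-- Codomain of a function sensitivity type (adding the function's own
top-level sensitivity environment). -/
def codC : CTy → Option CTy
  | (.arrow _ _ g2 S2, S) => some (g2, addE S2 S)
  | _ => none

/-- Instantiation of a distance-abstraction sensitivity type. -/
def instC (T : CTy) (Sr : GEnv) : Option CTy :=
  match T with
  | (.all r g Sg, S) => some (substT r Sr g, addE (substDVE r Sr Sg) S)
  | _ => none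

/-- Inversion of an evidence for the domain (contravariant). -/
def domEv (ε : Ev) : Option Ev := do
  let d2 ← domC ε.2
  let d1 ← domC ε.1
  pure (d2, d1)

/-- Inversion of an evidence for the codomain. -/
def codEv (ε : Ev) : Option Ev := do
  let c1 ← codC ε.1
  let c2 ← codC ε.2
  pure (c1, c2)

/-- Inversion of an evidence for instantiation. -/
def instEv (ε : Ev) (Sr : GEnv) : Option Ev := do
  let i1 ← instC ε.1 Sr
  let i2 ← instC ε.2 Sr
  pure (i1, i2)

/-- Reduction of GSCheck (the notions of reduction of Figure 6 together with
the congruence closure under evaluation contexts and error propagation). -/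
inductive Step : CExpr → CExpr → Prop
  | op : opDenote o c1 c2 = some c → opEv o ε1 ε2 = some ε → opCTy o T1 T2 = some T →
      Step (.op o (.ascr ε1 (.const c1) T1) (.ascr ε2 (.const c2) T2))
           (.ascr ε (.const c) T)
  | appOk : Simple u → domEv ε = some εd → ctrC ε1 εd = some ε' →
      codEv ε = some εc → codC T = some Tc →
      Step (.app (.ascr ε (.lam x T1' eb) T) (.ascr ε1 u T1))
           (.ascr εc (csubst x (.ascr ε' u T1') eb) Tc)
  | appErr : Simple u → domEv ε = some εd → ctrC ε1 εd = none →
      Step (.app (.ascr ε (.lam x T1' eb) T) (.ascr ε1 u T1)) .err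
  | inst : IsVal v → instEv ε Sr = some ε' → instC T Sr = some T' →
      Step (.tapp (.ascr ε (.tlam r v) T) Sr) (.ascr ε' (dsubst r Sr v) T')
  | ascrOk : Simple u → ctrC ε' ε = some ε'' →
      Step (.ascr ε (.ascr ε' u T') T) (.ascr ε'' u T)
  | ascrErr : Simple u → ctrC ε' ε = none →
      Step (.ascr ε (.ascr ε' u T') T) .err
  -- congruence (evaluation contexts)
  | opL : Step e1 e1' → Step (.op o e1 e2) (.op o e1' e2)
  | opR : IsVal v → Step e2 e2' → Step (.op o v e2) (.op o v e2')
  | appL : Step e1 e1' → Step (.app e1 e2) (.app e1' e2)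
  | appR : IsVal v → Step e2 e2' → Step (.app v e2) (.app v e2')
  | tappC : Step e e' → Step (.tapp e S) (.tapp e' S)
  | tlamC : Step e e' → Step (.tlam r e) (.tlam r e')
  | ascrC : Step e e' → Step (.ascr ε e T) (.ascr ε e' T)
  -- error propagation
  | opLErr : Step (.op o .err e2) .err
  | opRErr : IsVal v → Step (.op o v .err) .err
  | appLErr : Step (.app .err e2) .err
  | appRErr : IsVal v → Step (.app v .err) .err
  | tappErr : Step (.tapp .err S) .err
  | tlamErr : Step (.tlam r .err) .err
  | ascrErrP : Step (.ascr ε .err T) .err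

/-- Zero or more reduction steps. -/
def Steps : CExpr → CExpr → Prop := Relation.ReflTransGen Step

/-- e ⇓ v : e reduces to the value v. -/
def EvalsTo (e v : CExpr) : Prop := Steps e v ∧ IsVal v

/-- e ⇓ error. -/
def EvalsErr (e : CExpr) : Prop := Steps e .err

/-- Applying a substitution γ (a value environment) to a GSCheck expression. -/
def cmsubst (γ : String → CExpr) : CExpr → CExpr
  | .const c => .const c
  | .op o a b => .op o (cmsubst γ a) (cmsubst γ b)
  | .var y => γ y
  | .lam y T e => .lam y T (cmsubst (Function.update γ y (.var y)) e)
  | .app a b => .app (cmsubst γ a) (cmsubst γ b)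
  | .tlam r e => .tlam r (cmsubst γ e)
  | .tapp e S => .tapp (cmsubst γ e) S
  | .ascr ε e T => .ascr ε (cmsubst γ e) T
  | .err => .err

/-! ## Monitors, distances, canonical forms -/

/-- The monitor of a value: its evidence. -/
def monOf : CExpr → Option Ev
  | .ascr ε _ _ => some ε
  | _ => none

/-- The monitored sensitivity of a value: the static environment of lower
bounds of the sensitivity environment of the right-hand component of its
evidence. -/
def msOf : CExpr → String → ENNReal
  | .ascr (_, (_, S')) _ _ => fun r => (S' r).lo
  | _ => fun _ => 0

/-- Equi-precise monitors (each is more precise than the other). -/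
def EquiEv (v1 v2 : CExpr) : Prop :=
  ∃ ε1 ε2, monOf v1 = some ε1 ∧ monOf v2 = some ε2 ∧ EvPrec ε1 ε2 ∧ EvPrec ε2 ε1

/-- Canonical forms of a base type. -/
def CanonC (B : BaseTy) (v : CExpr) : Prop :=
  match B, v with
  | .real, .ascr _ (.const (.r _)) _ => True
  | .bool, .ascr _ (.const (.b _)) _ => True
  | _, _ => False

/-- The metric d_B on canonical forms of base types. -/
def dBC (B : BaseTy) (v1 v2 : CExpr) : ENNReal :=
  match B, v1, v2 with
  | .real, .ascr _ (.const (.r a)) _, .ascr _ (.const (.r b)) _ =>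
      ENNReal.ofReal |a - b|
  | .bool, .ascr _ (.const (.b a)) _, .ascr _ (.const (.b b)) _ =>
      if a = b then 0 else ⊤
  | _, _, _ => ⊤

/-- Distance environments: maps from distance variables to distances. -/
abbrev DEnv := String → ENNReal

/-- A distance environment is bounded if it avoids ∞. -/
def boundedD (dl : DEnv) : Prop := ∀ r, dl r ≠ ⊤

/-- Σ·δ for a static (fully precise) sensitivity environment Σ. -/
def dot (S : String → ENNReal) (dl : DEnv) : ENNReal := ∑' r, S r * dl r

/-- A static environment Σ' is (pointwise) within the gradual environment Σ,
i.e. Σ' is a static environment more precise than Σ. -/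
def staticPrec (S' : String → ENNReal) (S : GEnv) : Prop :=
  ∀ r, (S r).lo ≤ S' r ∧ S' r ≤ (S r).hi

/-! ## Logical relations (Figure 4): termination-insensitive -/

/-- Value logical relation (v₁,v₂) ∈ V_δ⟦g^Σ⟧ (Figure 4); the computation
relation E is inlined in the arrow and ∀ cases. -/
def Vrel (dl : DEnv) : GTy → GEnv → CExpr → CExpr → Prop
  | .base B, _, v1, v2 =>
      CanonC B v1 ∧ CanonC B v2 ∧
      dBC B v1 v2 ≤ dot (fun r => msOf v1 r ⊔ msOf v2 r) dl
  | .arrow g1 S1 g2 S2, S, v1, v2 =>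
      IsVal v1 ∧ IsVal v2 ∧
      ∀ v1' v2', Vrel dl g1 S1 v1' v2' →
        ∀ w1 w2, EvalsTo (.app v1 v1') w1 → EvalsTo (.app v2 v2') w2 →
          Vrel dl g2 (addE S2 S) w1 w2
  | .all r g Sg, S, v1, v2 =>
      IsVal v1 ∧ IsVal v2 ∧
      ∀ Sr, ∀ w1 w2, EvalsTo (.tapp v1 Sr) w1 → EvalsTo (.tapp v2 Sr) w2 →
        Vrel dl (substT r Sr g) (addE (substDVE r Sr Sg) S) w1 w2
termination_by g _ _ _ => g.size
decreasing_by all_goals simp [GTy.size, size_substT] <;> omega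

/-- Computation logical relation (e₁,e₂) ∈ E_δ⟦g^Σ⟧. -/
def Erel (dl : DEnv) (g : GTy) (S : GEnv) (e1 e2 : CExpr) : Prop :=
  ∀ v1 v2, EvalsTo e1 v1 → EvalsTo e2 v2 → Vrel dl g S v1 v2

/-- Type environments. -/
abbrev GTEnv := String → Option CTy

/-- Related substitutions (γ₁,γ₂) ∈ G_δ⟦Γ⟧. -/
def Grel (dl : DEnv) (Γ : GTEnv) (γ1 γ2 : String → CExpr) : Prop :=
  ∀ x T, Γ x = some T → Vrel dl T.1 T.2 (γ1 x) (γ2 x)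

/-- Semantic gradual sensitivity typing Γ ⊨ e : T. -/
def SemGTy (Γ : GTEnv) (e : CExpr) (T : CTy) : Prop :=
  ∀ dl γ1 γ2, Grel dl Γ γ1 γ2 → Erel dl T.1 T.2 (cmsubst γ1 e) (cmsubst γ2 e)

/-! ## Logical relations (Figure 5): termination-sensitive -/

/-- Termination-sensitive value logical relation (v₁,v₂) ∈ Vᵗˢ_δ⟦g^Σ⟧
(Figure 5); the computation relation Eᵗˢ is inlined in the arrow and ∀
cases. -/
def VrelTS (dl : DEnv) : GTy → GEnv → CExpr → CExpr → Prop
  | .base B, _, v1, v2 =>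
      EquiEv v1 v2 ∧ CanonC B v1 ∧ CanonC B v2 ∧
      dBC B v1 v2 ≤ dot (fun r => msOf v1 r ⊔ msOf v2 r) dl
  | .arrow g1 S1 g2 S2, S, v1, v2 =>
      EquiEv v1 v2 ∧ IsVal v1 ∧ IsVal v2 ∧
      ∀ v1' v2', VrelTS dl g1 S1 v1' v2' →
        ∀ w1, EvalsTo (.app v1 v1') w1 →
          ∃ w2, EvalsTo (.app v2 v2') w2 ∧ VrelTS dl g2 (addE S2 S) w1 w2
  | .all r g Sg, S, v1, v2 =>
      EquiEv v1 v2 ∧ IsVal v1 ∧ IsVal v2 ∧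
      ∀ Sr, boundedE Sr →
        ∀ w1, EvalsTo (.tapp v1 Sr) w1 →
          ∃ w2, EvalsTo (.tapp v2 Sr) w2 ∧
            VrelTS dl (substT r Sr g) (addE (substDVE r Sr Sg) S) w1 w2
termination_by g _ _ _ => g.size
decreasing_by all_goals simp [GTy.size, size_substT] <;> omega

/-- Termination-sensitive computation logical relation. -/
def ErelTS (dl : DEnv) (g : GTy) (S : GEnv) (e1 e2 : CExpr) : Prop :=
  ∀ v1, EvalsTo e1 v1 → ∃ v2, EvalsTo e2 v2 ∧ VrelTS dl g S v1 v2

/-- Termination-sensitive related substitutions (γ₁,γ₂) ∈ Gᵗˢ_δ⟦Γ⟧ (requires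
a bounded distance environment). -/
def GrelTS (dl : DEnv) (Γ : GTEnv) (γ1 γ2 : String → CExpr) : Prop :=
  boundedD dl ∧ ∀ x T, Γ x = some T → VrelTS dl T.1 T.2 (γ1 x) (γ2 x)

/-- Termination-sensitive semantic gradual sensitivity typing Γ ⊨ᵗˢ e : g^Σ
(requires the top-level sensitivity environment to be bounded). -/
def SemGTyTS (Γ : GTEnv) (e : CExpr) (T : CTy) : Prop :=
  boundedE T.2 ∧
  ∀ dl γ1 γ2, GrelTS dl Γ γ1 γ2 → ErelTS dl T.1 T.2 (cmsubst γ1 e) (cmsubst γ2 e)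

/-! ## Gradual metric preservation -/

/-- δ-proximity of two substitutions for a base-type environment Γ:
values are canonical forms at bounded distance as measured by the join of
their monitored sensitivities. -/
def Proximate (dl : DEnv) (Γ : GTEnv) (γ1 γ2 : String → CExpr) : Prop :=
  ∀ x B S, Γ x = some (.base B, S) →
    CanonC B (γ1 x) ∧ CanonC B (γ2 x) ∧
    dBC B (γ1 x) (γ2 x) ≤ dot (fun r => msOf (γ1 x) r ⊔ msOf (γ2 x) r) dl

/-- Termination-sensitive δ-proximity: additionally δ is bounded and
corresponding values carry equi-precise evidences. -/
def ProximateTS (dl : DEnv) (Γ : GTEnv) (γ1 γ2 : String → CExpr) : Prop :=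
  boundedD dl ∧
  ∀ x B S, Γ x = some (.base B, S) →
    EquiEv (γ1 x) (γ2 x) ∧ CanonC B (γ1 x) ∧ CanonC B (γ2 x) ∧
    dBC B (γ1 x) (γ2 x) ≤ dot (fun r => msOf (γ1 x) r ⊔ msOf (γ2 x) r) dl

/-- Gradual metric preservation GMP(Γ, e, B, Σ). -/
def GMP (Γ : GTEnv) (e : CExpr) (B : BaseTy) (S : GEnv) : Prop :=
  ∀ dl γ1 γ2, Proximate dl Γ γ1 γ2 →
    ∀ v1 v2, EvalsTo (cmsubst γ1 e) v1 → EvalsTo (cmsubst γ2 e) v2 →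
      ∃ S' : String → ENNReal, staticPrec S' S ∧ dBC B v1 v2 ≤ dot S' dl

/-- Termination-sensitive gradual metric preservation GMPᵗˢ(Γ, e, B, Σ). -/
def GMPts (Γ : GTEnv) (e : CExpr) (B : BaseTy) (S : GEnv) : Prop :=
  ∀ dl γ1 γ2, ProximateTS dl Γ γ1 γ2 →
    ∀ v1, EvalsTo (cmsubst γ1 e) v1 →
      ∃ v2, EvalsTo (cmsubst γ2 e) v2 ∧
        ∃ S' : String → ENNReal, staticPrec S' S ∧ dBC B v1 v2 ≤ dot S' dl

/-! ## The source language GS and type-directed elaboration (Figure 7) -/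

/-- GS source expressions. -/
inductive GExpr where
  | const : Const → GExpr
  | op : Op → GExpr → GExpr → GExpr
  | var : String → GExpr
  | lam : String → CTy → GExpr → GExpr
  | app : GExpr → GExpr → GExpr
  | tlam : String → GExpr → GExpr
  | tapp : GExpr → GEnv → GExpr
  | ascr : GExpr → CTy → GExpr

/-- The base type of a constant. -/
def constBTy : Const → BaseTy
  | .r _ => .real
  | .b _ => .bool

/-- Type-directed elaboration Γ ⊢ e ⇝ e' : T from GS to GSCheck (Figure 7);
it doubles as the syntactic type system of GS. -/
inductive Elab : GTEnv → GExpr → CExpr → CTy → Prop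
  | const : interC (.base (constBTy c), zeroE) (.base (constBTy c), zeroE) = some ε →
      Elab Γ (.const c) (.ascr ε (.const c) (.base (constBTy c), zeroE))
        (.base (constBTy c), zeroE)
  | op : Elab Γ a a' Ta → Elab Γ b b' Tb → opCTy o Ta Tb = some T →
      Elab Γ (.op o a b) (.op o a' b') T
  | var : Γ x = some T → Elab Γ (.var x) (.var x) T
  | lam : Elab (Function.update Γ x (some T1)) e e' T2 →
      interC (.arrow T1.1 T1.2 T2.1 T2.2, zeroE) (.arrow T1.1 T1.2 T2.1 T2.2, zeroE)
        = some ε →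
      Elab Γ (.lam x T1 e)
        (.ascr ε (.lam x T1 e') (.arrow T1.1 T1.2 T2.1 T2.2, zeroE))
        (.arrow T1.1 T1.2 T2.1 T2.2, zeroE)
  | app : Elab Γ a a' Ta → Elab Γ b b' Tb →
      domC Ta = some Td → interC Tb Td = some ε2 → codC Ta = some Tc →
      Elab Γ (.app a b) (.app a' (.ascr ε2 b' Td)) Tc
  | tlam : Elab Γ e e' T →
      interC (.all r T.1 T.2, zeroE) (.all r T.1 T.2, zeroE) = some ε →
      Elab Γ (.tlam r e) (.ascr ε (.tlam r e') (.all r T.1 T.2, zeroE))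
        (.all r T.1 T.2, zeroE)
  | tapp : Elab Γ e e' T → instC T Sr = some T' →
      Elab Γ (.tapp e Sr) (.tapp e' Sr) T'
  | ascr : Elab Γ e e' T → interC T T' = some ε →
      Elab Γ (.ascr e T') (.ascr ε e' T') T'

/-- The empty type environment. -/
def emptyEnv : GTEnv := fun _ => none

/-! ## Precision on expressions -/

/-- Precision on GS source expressions (the natural syntactic lifting of type
precision to terms). -/
inductive GPrec : GExpr → GExpr → Prop
  | const : GPrec (.const c) (.const c)
  | op : GPrec a a' → GPrec b b' → GPrec (.op o a b) (.op o a' b')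
  | var : GPrec (.var x) (.var x)
  | lam : CTyPrec T T' → GPrec e e' → GPrec (.lam x T e) (.lam x T' e')
  | app : GPrec a a' → GPrec b b' → GPrec (.app a b) (.app a' b')
  | tlam : GPrec e e' → GPrec (.tlam r e) (.tlam r e')
  | tapp : GPrec e e' → precE S S' → GPrec (.tapp e S) (.tapp e' S')
  | ascr : GPrec e e' → CTyPrec T T' → GPrec (.ascr e T) (.ascr e' T')

/-- Precision on GSCheck expressions (including evidences). -/
inductive CPrec : CExpr → CExpr → Prop
  | const : CPrec (.const c) (.const c)
  | op : CPrec a a' → CPrec b b' → CPrec (.op o a b) (.op o a' b')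
  | var : CPrec (.var x) (.var x)
  | lam : CTyPrec T T' → CPrec e e' → CPrec (.lam x T e) (.lam x T' e')
  | app : CPrec a a' → CPrec b b' → CPrec (.app a b) (.app a' b')
  | tlam : CPrec e e' → CPrec (.tlam r e) (.tlam r e')
  | tapp : CPrec e e' → precE S S' → CPrec (.tapp e S) (.tapp e' S')
  | ascr : EvPrec ε ε' → CPrec e e' → CTyPrec T T' →
      CPrec (.ascr ε e T) (.ascr ε' e' T')
  | err : CPrec .err .err


/-! ### Auxiliary development for the adequacy theorem -/

theorem SI.prec_refl (a : SI) : a.prec a := ⟨le_rfl, le_rfl⟩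

theorem SI.prec_trans {a b c : SI} (h1 : a.prec b) (h2 : b.prec c) : a.prec c :=
  ⟨le_trans h2.1 h1.1, le_trans h1.2 h2.2⟩

theorem precE_trans {A B C : GEnv} (h1 : precE A B) (h2 : precE B C) : precE A C :=
  fun x => SI.prec_trans (h1 x) (h2 x)

theorem TyPrec_trans : ∀ {a b c : GTy}, TyPrec a b → TyPrec b c → TyPrec a c := by
  intro a b c h1 h2
  induction h1 generalizing c with
  | base => cases h2; exact .base
  | arrow _ hS1 _ hS2 ih1 ih2 =>
      cases h2 with
      | arrow h1' hS1' h2' hS2' =>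
        exact .arrow (ih1 h1') (precE_trans hS1 hS1') (ih2 h2') (precE_trans hS2 hS2')
  | all _ hS ih =>
      cases h2 with
      | all h' hS' => exact .all (ih h') (precE_trans hS hS')

theorem CTyPrec_trans {a b c : CTy} (h1 : CTyPrec a b) (h2 : CTyPrec b c) : CTyPrec a c :=
  ⟨TyPrec_trans h1.1 h2.1, precE_trans h1.2 h2.2⟩

theorem SI.prec_add {a a' b b' : SI} (ha : a.prec a') (hb : b.prec b') :
    (a.add b).prec (a'.add b') :=
  ⟨add_le_add ha.1 hb.1, add_le_add ha.2 hb.2⟩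

theorem SI.prec_mul {a a' b b' : SI} (ha : a.prec a') (hb : b.prec b') :
    (a.mul b).prec (a'.mul b') :=
  ⟨mul_le_mul' ha.1 hb.1, mul_le_mul' ha.2 hb.2⟩

theorem precE_addE {A A' B B' : GEnv} (ha : precE A A') (hb : precE B B') :
    precE (addE A B) (addE A' B') :=
  fun x => SI.prec_add (ha x) (hb x)

theorem precE_scaleE (g : SI) {A A' : GEnv} (ha : precE A A') :
    precE (scaleE g A) (scaleE g A') :=
  fun x => SI.prec_mul (SI.prec_refl g) (ha x)

theorem precE_substDVE (r : String) (Sr : GEnv) {A A' : GEnv} (ha : precE A A') :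
    precE (substDVE r Sr A) (substDVE r Sr A') := by
  intro y
  unfold substDVE
  refine SI.prec_add ?_ (SI.prec_mul (ha r) (SI.prec_refl _))
  split
  · exact SI.prec_refl _
  · exact ha y

theorem TyPrec_substT (r : String) (Sr : GEnv) {g g' : GTy} (h : TyPrec g g') :
    TyPrec (substT r Sr g) (substT r Sr g') := by
  induction h with
  | base => exact .base
  | arrow _ hS1 _ hS2 ih1 ih2 =>
      exact .arrow ih1 (precE_substDVE r Sr hS1) ih2 (precE_substDVE r Sr hS2)
  | @all g g' S S' r' h hS ih =>
      unfold substT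
      split
      · exact .all h hS
      · exact .all ih (precE_substDVE r Sr hS)

theorem CTyPrec_substCTy (r : String) (Sr : GEnv) {A B : CTy} (h : CTyPrec A B) :
    CTyPrec (substCTy r Sr A) (substCTy r Sr B) :=
  ⟨TyPrec_substT r Sr h.1, precE_substDVE r Sr h.2⟩

theorem interE_prec {S1 S2 l r : GEnv} (h : interE S1 S2 = some (l, r)) :
    precE l S1 ∧ precE r S2 := by
  unfold interE at h
  split_ifs at h with hc
  · simp only [Option.some.injEq, Prod.mk.injEq] at h
    obtain ⟨rfl, rfl⟩ := h
    exact ⟨fun x => ⟨le_rfl, inf_le_left⟩, fun x => ⟨le_sup_right, le_rfl⟩⟩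

theorem interT_prec : ∀ (t1 t2 l r : GTy), interT t1 t2 = some (l, r) →
    TyPrec l t1 ∧ TyPrec r t2 := by
  intro t1 t2
  induction t1, t2 using interT.induct with
  | case1 B =>
      intro l r h
      rw [interT, if_pos rfl] at h
      simp only [Option.some.injEq, Prod.mk.injEq] at h
      obtain ⟨rfl, rfl⟩ := h
      exact ⟨.base, .base⟩
  | case2 B1 B2 hne =>
      intro l r h
      rw [interT, if_neg hne] at h
      exact Option.noConfusion rfl (heq_of_eq h)
  | case3 a1 sa1 b1 sb1 a2 sa2 b2 sb2 iha ihb =>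
      intro l r h
      rw [interT] at h
      simp only [Option.bind_eq_bind', Option.bind_eq_some_iff, Option.pure_def,
        Option.some.injEq, Prod.mk.injEq] at h
      obtain ⟨⟨a2', a1'⟩, ha, ⟨sa2', sa1'⟩, hsa, ⟨b1', b2'⟩, hb, ⟨sb1', sb2'⟩, hsb, rfl, rfl⟩ := h
      obtain ⟨ha2, ha1⟩ := iha _ _ ha
      obtain ⟨hsa2, hsa1⟩ := interE_prec hsa
      obtain ⟨hb1, hb2⟩ := ihb _ _ hb
      obtain ⟨hsb1, hsb2⟩ := interE_prec hsb
      exact ⟨.arrow ha1 hsa1 hb1 hsb1, .arrow ha2 hsa2 hb2 hsb2⟩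
  | case4 g1 s1 r2 g2 s2 ih =>
      intro l r h
      rw [interT, if_pos rfl] at h
      simp only [Option.bind_eq_bind', Option.bind_eq_some_iff, Option.pure_def,
        Option.some.injEq, Prod.mk.injEq] at h
      obtain ⟨⟨g1', g2'⟩, hg, ⟨s1', s2'⟩, hs, rfl, rfl⟩ := h
      obtain ⟨hg1, hg2⟩ := ih _ _ hg
      obtain ⟨hs1, hs2⟩ := interE_prec hs
      exact ⟨.all hg1 hs1, .all hg2 hs2⟩
  | case5 r1 g1 s1 r2 g2 s2 hne =>
      intro l r h
      rw [interT, if_neg hne] at h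
      exact Option.noConfusion rfl (heq_of_eq h)
  | case6 x1 x2 hbse harr hall =>
      intro l r h
      exfalso
      rcases x1 with B1 | ⟨a1, sa1, b1, sb1⟩ | ⟨r1, g1, s1⟩ <;>
        rcases x2 with B2 | ⟨a2, sa2, b2, sb2⟩ | ⟨r2, g2, s2⟩ <;>
          first
            | exact hbse _ _ rfl rfl
            | exact harr _ _ _ _ _ _ _ _ rfl rfl
            | exact hall _ _ _ _ _ _ rfl rfl
            | (rw [interT.eq_def] at h; simp at h)

theorem interC_prec {T1 T2 : CTy} {ε : Ev} (h : interC T1 T2 = some ε) :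
    CTyPrec ε.1 T1 ∧ CTyPrec ε.2 T2 := by
  rcases hg : interT T1.1 T2.1 with _ | ⟨g1, g2⟩ <;>
    rcases hs : interE T1.2 T2.2 with _ | ⟨s1, s2⟩ <;>
      rw [interC, hg, hs] at h
  iterate 3 exact Option.noConfusion rfl (heq_of_eq h)
  obtain rfl := Option.some.inj h
  obtain ⟨hg1, hg2⟩ := interT_prec _ _ _ _ hg
  obtain ⟨hs1, hs2⟩ := interE_prec hs
  exact ⟨⟨hg1, hs1⟩, ⟨hg2, hs2⟩⟩

theorem ctrE_prec {s1 s2 s3 s4 l r : GEnv} (h : ctrE s1 s2 s3 s4 = some (l, r)) :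
    precE l s1 ∧ precE r s4 := by
  unfold ctrE at h
  split_ifs at h with hc
  · simp only [Option.some.injEq, Prod.mk.injEq] at h
    obtain ⟨rfl, rfl⟩ := h
    exact ⟨fun x => ⟨le_rfl, le_trans inf_le_left inf_le_left⟩,
           fun x => ⟨le_sup_right, le_rfl⟩⟩

theorem ctrT_prec : ∀ (t1 t2 t3 t4 l r : GTy), ctrT t1 t2 t3 t4 = some (l, r) →
    TyPrec l t1 ∧ TyPrec r t4 := by
  intro t1 t2 t3 t4
  induction t1, t2, t3, t4 using ctrT.induct with
  | case1 B1 B2 B3 B4 hc =>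
      intro l r h
      obtain ⟨rfl, rfl, rfl⟩ := hc
      rw [ctrT, if_pos ⟨rfl, rfl, rfl⟩] at h
      simp only [Option.some.injEq, Prod.mk.injEq] at h
      obtain ⟨rfl, rfl⟩ := h
      exact ⟨.base, .base⟩
  | case2 B1 B2 B3 B4 hc =>
      intro l r h
      rw [ctrT, if_neg hc] at h
      exact Option.noConfusion rfl (heq_of_eq h)
  | case3 a1 sa1 b1 sb1 a2 sa2 b2 sb2 a3 sa3 b3 sb3 a4 sa4 b4 sb4 iha ihb =>
      intro l r h
      rw [ctrT] at h
      simp only [Option.bind_eq_bind', Option.bind_eq_some_iff, Option.pure_def,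
        Option.some.injEq, Prod.mk.injEq] at h
      obtain ⟨⟨a4', a1'⟩, ha, ⟨sa4', sa1'⟩, hsa, ⟨b1', b4'⟩, hb, ⟨sb1', sb4'⟩, hsb, rfl, rfl⟩ := h
      obtain ⟨ha4, ha1⟩ := iha _ _ ha
      obtain ⟨hsa4, hsa1⟩ := ctrE_prec hsa
      obtain ⟨hb1, hb4⟩ := ihb _ _ hb
      obtain ⟨hsb1, hsb4⟩ := ctrE_prec hsb
      exact ⟨.arrow ha1 hsa1 hb1 hsb1, .arrow ha4 hsa4 hb4 hsb4⟩
  | case4 r1 g1 s1 r2 g2 s2 r3 g3 s3 r4 g4 s4 hc ih =>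
      intro l r h
      obtain ⟨rfl, rfl, rfl⟩ := hc
      rw [ctrT, if_pos ⟨rfl, rfl, rfl⟩] at h
      simp only [Option.bind_eq_bind', Option.bind_eq_some_iff, Option.pure_def,
        Option.some.injEq, Prod.mk.injEq] at h
      obtain ⟨⟨g1', g4'⟩, hg, ⟨s1', s4'⟩, hs, rfl, rfl⟩ := h
      obtain ⟨hg1, hg4⟩ := ih _ _ hg
      obtain ⟨hs1, hs4⟩ := ctrE_prec hs
      exact ⟨.all hg1 hs1, .all hg4 hs4⟩
  | case5 r1 g1 s1 r2 g2 s2 r3 g3 s3 r4 g4 s4 hc =>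
      intro l r h
      rw [ctrT, if_neg hc] at h
      exact Option.noConfusion rfl (heq_of_eq h)
  | case6 x1 x2 x3 x4 hbse harr hall =>
      intro l r h
      exfalso
      rcases x1 with B1 | ⟨a1, sa1, b1, sb1⟩ | ⟨r1, g1, s1⟩ <;>
        rcases x2 with B2 | ⟨a2, sa2, b2, sb2⟩ | ⟨r2, g2, s2⟩ <;>
          rcases x3 with B3 | ⟨a3, sa3, b3, sb3⟩ | ⟨r3, g3, s3⟩ <;>
            rcases x4 with B4 | ⟨a4, sa4, b4, sb4⟩ | ⟨r4, g4, s4⟩ <;>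
              first
                | exact hbse _ _ _ _ rfl rfl rfl rfl
                | exact harr _ _ _ _ _ _ _ _ _ _ _ _ _ _ _ _ rfl rfl rfl rfl
                | exact hall _ _ _ _ _ _ _ _ _ _ _ _ rfl rfl rfl rfl
                | (rw [ctrT.eq_def] at h; simp at h)

theorem ctrC_prec {e1 e2 ε : Ev} (h : ctrC e1 e2 = some ε) :
    CTyPrec ε.1 e1.1 ∧ CTyPrec ε.2 e2.2 := by
  rw [ctrC] at h
  simp only [Option.bind_eq_bind', Option.bind_eq_some_iff, Option.pure_def, Option.some.injEq] at h
  obtain ⟨⟨g1, g4⟩, hg, ⟨s1, s4⟩, hs, rfl⟩ := h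
  obtain ⟨hg1, hg4⟩ := ctrT_prec _ _ _ _ _ _ hg
  obtain ⟨hs1, hs4⟩ := ctrE_prec hs
  exact ⟨⟨hg1, hs1⟩, ⟨hg4, hs4⟩⟩

theorem opCTy_mono {o : Op} {A B A' B' C C' : CTy} (hA : CTyPrec A A') (hB : CTyPrec B B')
    (h : opCTy o A B = some C) (h' : opCTy o A' B' = some C') : CTyPrec C C' := by
  obtain ⟨ga, Sa⟩ := A; obtain ⟨gb, Sb⟩ := B
  obtain ⟨ga', Sa'⟩ := A'; obtain ⟨gb', Sb'⟩ := B'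
  obtain ⟨hA1, hA2⟩ := hA; obtain ⟨hB1, hB2⟩ := hB
  dsimp only at hA1 hA2 hB1 hB2
  cases o <;>
    rcases ga with ⟨_ | _⟩ | ⟨_, _, _, _⟩ | ⟨_, _, _⟩ <;>
      rcases gb with ⟨_ | _⟩ | ⟨_, _, _, _⟩ | ⟨_, _, _⟩ <;>
        try exact Option.noConfusion rfl (heq_of_eq h)
  all_goals
    cases hA1; cases hB1
  all_goals
    simp only [opCTy, Option.some.injEq] at h h'
  all_goals subst h; subst h'
  all_goals
    first
      | exact ⟨.base, precE_addE hA2 hB2⟩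
      | exact ⟨.base, precE_scaleE _ (precE_addE hA2 hB2)⟩

theorem domC_some_of_prec {A B d : CTy} (h : CTyPrec A B) (hd : domC B = some d) :
    ∃ d', domC A = some d' ∧ CTyPrec d' d := by
  obtain ⟨ga, Sa⟩ := A; obtain ⟨gb, Sb⟩ := B
  obtain ⟨h1, -⟩ := h
  dsimp only at h1
  cases h1 with
  | base => exact Option.noConfusion rfl (heq_of_eq hd)
  | arrow hg1 hS1 hg2 hS2 =>
      simp only [domC, Option.some.injEq] at hd
      subst hd
      exact ⟨_, rfl, hg1, hS1⟩
  | all _ _ => exact Option.noConfusion rfl (heq_of_eq hd)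

theorem codC_mono {A B c c' : CTy} (h : CTyPrec A B) (h1 : codC A = some c)
    (h2 : codC B = some c') : CTyPrec c c' := by
  obtain ⟨ga, Sa⟩ := A; obtain ⟨gb, Sb⟩ := B
  obtain ⟨hg, hS⟩ := h
  dsimp only at hg hS
  cases hg with
  | base => exact Option.noConfusion rfl (heq_of_eq h1)
  | arrow hg1 hS1 hg2 hS2 =>
      simp only [codC, Option.some.injEq] at h1 h2
      subst h1; subst h2
      exact ⟨hg2, precE_addE hS2 hS⟩
  | all _ _ => exact Option.noConfusion rfl (heq_of_eq h1)

theorem instC_mono {A B i i' : CTy} {Sr : GEnv} (h : CTyPrec A B) (h1 : instC A Sr = some i)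
    (h2 : instC B Sr = some i') : CTyPrec i i' := by
  obtain ⟨ga, Sa⟩ := A; obtain ⟨gb, Sb⟩ := B
  obtain ⟨hg, hS⟩ := h
  dsimp only at hg hS
  cases hg with
  | base => exact Option.noConfusion rfl (heq_of_eq h1)
  | arrow _ _ _ _ => exact Option.noConfusion rfl (heq_of_eq h1)
  | all hg' hS' =>
      simp only [instC, Option.some.injEq] at h1 h2
      subst h1; subst h2
      exact ⟨TyPrec_substT _ _ hg', precE_addE (precE_substDVE _ _ hS') hS⟩

theorem domC_substCTy {A d : CTy} (r : String) (Sr : GEnv) (h : domC A = some d) :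
    domC (substCTy r Sr A) = some (substCTy r Sr d) := by
  obtain ⟨ga, Sa⟩ := A
  cases ga with
  | base _ => exact Option.noConfusion rfl (heq_of_eq h)
  | arrow g1 S1 g2 S2 =>
      simp only [domC, Option.some.injEq] at h
      subst h
      rfl
  | all _ _ _ => exact Option.noConfusion rfl (heq_of_eq h)

/-- Expression is not a raw lambda. -/
def NotLam (e : CExpr) : Prop := ∀ x T b, e ≠ .lam x T b

/-- Shape condition relating the left evidence component to a simple subject. -/
def Shape (ε1 : CTy) (e : CExpr) : Prop :=
  ∀ x T1 b, e = .lam x T1 b → ∃ d, domC ε1 = some d ∧ CTyPrec d T1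

/-- The monitor invariant. -/
def Inv : CExpr → Prop
  | .const _ => True
  | .op _ a b => Inv a ∧ Inv b
  | .var _ => True
  | .lam _ _ e => Inv e ∧ NotLam e
  | .app a b => Inv a ∧ Inv b
  | .tlam _ e => Inv e
  | .tapp e _ => Inv e
  | .ascr ε e T => Inv e ∧ CTyPrec ε.2 T ∧ Shape ε.1 e
  | .err => True

theorem step_ne_lam {e e' : CExpr} (h : Step e e') : NotLam e' := by
  intro x T b hx; cases h <;> simp_all

theorem csubst_ne_lam {e v : CExpr} (x : String) (he : NotLam e) (hv : NotLam v) :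
    NotLam (csubst x v e) := by
  intro x' T b h
  cases e <;> simp only [csubst] at h <;> try exact CExpr.noConfusion h
  case var y =>
    split at h
    · exact hv _ _ _ h
    · exact CExpr.noConfusion h
  case lam y T0 b0 => exact he y T0 b0 rfl

theorem inv_csubst (x : String) {v : CExpr} (hv : Inv v) (hvn : NotLam v) :
    ∀ e, Inv e → Inv (csubst x v e) := by
  intro e
  induction e with
  | const c => intro _; trivial
  | op o a b iha ihb => intro he; exact ⟨iha he.1, ihb he.2⟩
  | var y =>
      intro _
      simp only [csubst]
      split
      · exact hv
      · trivial
  | lam y T e ih =>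
      intro he
      simp only [csubst]
      split
      · exact he
      · exact ⟨ih he.1, csubst_ne_lam x he.2 hvn⟩
  | app a b iha ihb => intro he; exact ⟨iha he.1, ihb he.2⟩
  | tlam r e ih => intro he; exact ih he
  | tapp e S ih => intro he; exact ih he
  | ascr ε e T ih =>
      intro he
      refine ⟨ih he.1, he.2.1, ?_⟩
      intro x' T1 b hb
      cases e <;> simp only [csubst] at hb <;> try exact CExpr.noConfusion hb
      case var y =>
        split at hb
        · exact absurd hb (hvn _ _ _)
        · exact CExpr.noConfusion hb
      case lam y T0 b0 =>
        obtain ⟨d, hd, hdp⟩ := he.2.2 y T0 b0 rfl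
        refine ⟨d, hd, ?_⟩
        split at hb <;> (injection hb with h1 h2 h3; subst h2; exact hdp)
  | err => intro _; trivial

theorem dsubst_ne_lam {e : CExpr} (r : String) (Sr : GEnv) (he : NotLam e) :
    NotLam (dsubst r Sr e) := by
  intro x' T b h
  cases e <;> simp only [dsubst] at h <;> try exact CExpr.noConfusion h
  case lam y T0 b0 => exact he y T0 b0 rfl
  case tlam r0 b0 =>
    split at h <;> exact CExpr.noConfusion h

theorem dsubst_inv (r : String) (Sr : GEnv) : ∀ e, Inv e → Inv (dsubst r Sr e) := by
  intro e
  induction e with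
  | const c => intro _; trivial
  | op o a b iha ihb => intro he; exact ⟨iha he.1, ihb he.2⟩
  | var y => intro _; trivial
  | lam y T e ih => intro he; exact ⟨ih he.1, dsubst_ne_lam r Sr he.2⟩
  | app a b iha ihb => intro he; exact ⟨iha he.1, ihb he.2⟩
  | tlam r' e ih =>
      intro he
      simp only [dsubst]
      split
      · exact he
      · exact ih he
  | tapp e S ih => intro he; exact ih he
  | ascr ε e T ih =>
      intro he
      refine ⟨ih he.1, CTyPrec_substCTy r Sr he.2.1, ?_⟩
      intro x' T1 b hb
      cases e <;> simp only [dsubst] at hb <;> try exact CExpr.noConfusion hb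
      case lam y T0 b0 =>
        injection hb with h1 h2 h3
        obtain ⟨d, hd, hdp⟩ := he.2.2 y T0 b0 rfl
        subst h2
        exact ⟨substCTy r Sr d, domC_substCTy r Sr hd, CTyPrec_substCTy r Sr hdp⟩
      case tlam r0 e0 =>
        split at hb <;> exact CExpr.noConfusion hb
  | err => intro _; trivial

theorem elab_ne_lam {Γ g e T} (h : Elab Γ g e T) : NotLam e := by
  intro x T1 b hx; cases h <;> simp_all

theorem elab_inv {Γ g e T} (h : Elab Γ g e T) : Inv e := by
  induction h with
  | const hi =>
      obtain ⟨-, h2⟩ := interC_prec hi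
      exact ⟨trivial, h2, fun x T1 b hb => CExpr.noConfusion hb⟩
  | op ha hb hop iha ihb => exact ⟨iha, ihb⟩
  | var _ => trivial
  | lam he hi ihe =>
      obtain ⟨h1, h2⟩ := interC_prec hi
      refine ⟨⟨ihe, elab_ne_lam he⟩, h2, ?_⟩
      intro x' T1' b hb
      injection hb with e1 e2 e3
      subst e2
      exact domC_some_of_prec h1 rfl
  | app ha hb hd hi hc iha ihb =>
      obtain ⟨-, h2⟩ := interC_prec hi
      exact ⟨iha, ⟨ihb, h2, fun x T1 b hb' => absurd hb' (elab_ne_lam hb _ _ _)⟩⟩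
  | tlam he hi ihe =>
      obtain ⟨-, h2⟩ := interC_prec hi
      exact ⟨ihe, h2, fun x T1 b hb => CExpr.noConfusion hb⟩
  | tapp he hi ihe => exact ihe
  | ascr he hi ihe =>
      obtain ⟨-, h2⟩ := interC_prec hi
      exact ⟨ihe, h2, fun x T1 b hb => absurd hb (elab_ne_lam he _ _ _)⟩

theorem step_inv {e e' : CExpr} (h : Step e e') (hi : Inv e) : Inv e' := by
  induction h with
  | op hden hev hty =>
      obtain ⟨⟨-, h1, -⟩, ⟨-, h2, -⟩⟩ := hi
      simp only [opEv, Option.bind_eq_bind', Option.bind_eq_some_iff, Option.pure_def,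
        Option.some.injEq] at hev
      obtain ⟨Ca, hCa, Cb, hCb, rfl⟩ := hev
      exact ⟨trivial, opCTy_mono h1 h2 hCb hty, fun x T1' b hb => CExpr.noConfusion hb⟩
  | appOk hu hdom hctr hcod hcodT =>
      obtain ⟨⟨⟨hinveb, hnl⟩, hpf, hshf⟩, hinvu, hpa, hsha⟩ := hi
      simp only [domEv, Option.bind_eq_bind', Option.bind_eq_some_iff, Option.pure_def,
        Option.some.injEq] at hdom
      obtain ⟨d2, hd2, d1, hd1, rfl⟩ := hdom
      simp only [codEv, Option.bind_eq_bind', Option.bind_eq_some_iff, Option.pure_def,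
        Option.some.injEq] at hcod
      obtain ⟨c1, hc1, c2, hc2, rfl⟩ := hcod
      obtain ⟨hctr1, hctr2⟩ := ctrC_prec hctr
      obtain ⟨dd, hdd, hddp⟩ := hshf _ _ _ rfl
      have hd1d : dd = d1 := Option.some.inj (hdd.symm.trans hd1)
      subst hd1d
      refine ⟨?_, codC_mono hpf hc2 hcodT, ?_⟩
      · refine inv_csubst _ ?_ (fun _ _ _ hh => CExpr.noConfusion hh) _ hinveb
        refine ⟨hinvu, CTyPrec_trans hctr2 hddp, ?_⟩
        intro x' T1'' b hb
        obtain ⟨d0, hd0, hd0p⟩ := hsha _ _ _ hb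
        obtain ⟨d0', hd0', hd0p'⟩ := domC_some_of_prec hctr1 hd0
        exact ⟨d0', hd0', CTyPrec_trans hd0p' hd0p⟩
      · intro x' T1'' b hb
        exact absurd hb
          (csubst_ne_lam _ hnl (fun _ _ _ hh => CExpr.noConfusion hh) _ _ _)
  | appErr _ _ _ => trivial
  | inst hv hiev hiT =>
      obtain ⟨hinvv, hpe, -⟩ := hi
      simp only [instEv, Option.bind_eq_bind', Option.bind_eq_some_iff, Option.pure_def,
        Option.some.injEq] at hiev
      obtain ⟨i1, hi1, i2, hi2, rfl⟩ := hiev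
      refine ⟨dsubst_inv _ _ _ hinvv, instC_mono hpe hi2 hiT, ?_⟩
      cases hv with
      | mk hu =>
          intro x' T1 b hb
          simp only [dsubst] at hb
          exact CExpr.noConfusion hb
  | ascrOk hu hctr =>
      obtain ⟨⟨hinvu, hpe', hsh'⟩, hpe, -⟩ := hi
      obtain ⟨hc1, hc2⟩ := ctrC_prec hctr
      refine ⟨hinvu, CTyPrec_trans hc2 hpe, ?_⟩
      intro x' T1 b hb
      obtain ⟨d0, hd0, hd0p⟩ := hsh' _ _ _ hb
      obtain ⟨d, hd, hdp⟩ := domC_some_of_prec hc1 hd0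
      exact ⟨d, hd, CTyPrec_trans hdp hd0p⟩
  | ascrErr _ _ => trivial
  | opL _ ih => exact ⟨ih hi.1, hi.2⟩
  | opR _ _ ih => exact ⟨hi.1, ih hi.2⟩
  | appL _ ih => exact ⟨ih hi.1, hi.2⟩
  | appR _ _ ih => exact ⟨hi.1, ih hi.2⟩
  | tappC _ ih => exact ih hi
  | tlamC _ ih => exact ih hi
  | ascrC hs ih =>
      refine ⟨ih hi.1, hi.2.1, ?_⟩
      intro x' T1 b hb
      exact absurd hb (step_ne_lam hs _ _ _)
  | opLErr => trivial
  | opRErr _ => trivial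
  | appLErr => trivial
  | appRErr _ => trivial
  | tappErr => trivial
  | tlamErr => trivial
  | ascrErrP => trivial

theorem steps_inv {e e' : CExpr} (h : Steps e e') (hi : Inv e) : Inv e' := by
  induction h with
  | refl => exact hi
  | tail _ hs ih => exact step_inv hs ih

end GS


open GS in
/-- Adequacy of evidence as runtime sensitivity monitor: if a well-typed
closed GSCheck expression (obtained by elaboration) reduces to a value
⟨T₁,T₂⟩ u :: T, then T₂ ⊑ T; in particular the monitored sensitivity
environment (the lower bounds of the sensitivity environment of T₂) is
contained interval-wise in the sensitivity environment of T. -/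
theorem evidence_monitor_adequacy
    (e : GExpr) (e0 : CExpr) (T0 : CTy) (h : Elab emptyEnv e e0 T0)
    (ε : Ev) (u : CExpr) (T : CTy)
    (hval : IsVal (CExpr.ascr ε u T))
    (hred : Steps e0 (CExpr.ascr ε u T)) :
    CTyPrec ε.2 T ∧ ∀ r, (T.2 r).lo ≤ (ε.2.2 r).lo ∧ (ε.2.2 r).lo ≤ (T.2 r).hi := by
  have hinv : Inv (CExpr.ascr ε u T) := steps_inv hred (elab_inv h)
  obtain ⟨-, hp, -⟩ := hinv
  refine ⟨hp, fun r => ⟨(hp.2 r).1, le_trans (ε.2.2 r).isle (hp.2 r).2⟩⟩
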